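/- Let x be an s-t flow in a directed graph G = (V, A) with no arcs entering s, and let e ∈ A. Then there exists an s-t flow x' with x' ≤ x componentwise, x'(e) = 0, and value(x') ≥ value(x) − x(e), where value(x) = x(δ⁺(s)). (I.e., the s-t flow polytope is w-down-closed for w = χ^{δ⁺(s)}.) -/

import Mathlib

open Finset

set_option linter.unusedSectionVars false

section FlowAux

variable {V A : Type*} [Fintype V] [Fintype A] [DecidableEq V] [DecidableEq A]
variable (tail head : A → V)

/-- A walk from `u` to `v` given by a list of arcs. -/
inductive IsWalk : V → V → List A → Prop
  | nil (u : V) : IsWalk u u []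
  | cons {u v : V} {a : A} {L : List A} (h : tail a = u)
      (hw : IsWalk (head a) v L) : IsWalk u v (a :: L)

variable {tail head}

lemma isWalk_append {u v w : V} {L M : List A} (h1 : IsWalk tail head u v L)
    (h2 : IsWalk tail head v w M) : IsWalk tail head u w (L ++ M) := by
  induction h1 with
  | nil => simpa using h2
  | cons h hw ih => exact IsWalk.cons h (ih h2)

/-- Counting identity for walks. -/
lemma isWalk_countP {u w : V} {L : List A} (hw : IsWalk tail head u w L) (v : V) :
    L.countP (fun a => decide (tail a = v)) + (if w = v then 1 else 0) =
      L.countP (fun a => decide (head a = v)) + (if u = v then 1 else 0) := by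
  induction hw with
  | nil u => rfl
  | @cons u' w' a L h hw' ih =>
      rw [List.countP_cons, List.countP_cons]
      subst h
      simp only [decide_eq_true_eq]
      omega

lemma sum_count_eq (p : A → Prop) [DecidablePred p] (L : List A) :
    ∑ a ∈ univ.filter p, (L.count a : ℝ) = (L.countP (fun a => decide (p a)) : ℝ) := by
  induction L with
  | nil => simp
  | cons b L ih =>
      simp only [List.count_cons, List.countP_cons]
      push_cast
      rw [Finset.sum_add_distrib, ih]
      by_cases hb : p b
      · rw [Finset.sum_eq_single b]
        · simp [hb]
        · intro c _ hcb
          simp [(by simpa [eq_comm] using hcb : ¬ b = c)]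
        · intro hbn
          simp [hb] at hbn
      · rw [Finset.sum_eq_zero]
        · simp [hb]
        · intro c hc
          simp only [mem_filter] at hc
          have : ¬ b = c := fun h => hb (h ▸ hc.2)
          simp [this]

/-- Extract a positive walk from reflexive-transitive reachability. -/
lemma exists_walk_of_reflTransGen (x : A → ℝ) {u v : V}
    (h : Relation.ReflTransGen (fun p q => ∃ a, 0 < x a ∧ tail a = p ∧ head a = q) u v) :
    ∃ L : List A, IsWalk tail head u v L ∧ ∀ a ∈ L, 0 < x a := by
  induction h using Relation.ReflTransGen.head_induction_on with
  | refl => exact ⟨[], IsWalk.nil v, by simp⟩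
  | head hr _ ih =>
      obtain ⟨a, hpos, hta, hha⟩ := hr
      obtain ⟨L, hwL, hposL⟩ := ih
      exact ⟨a :: L, IsWalk.cons hta (hha ▸ hwL), by
        intro b hb; rcases List.mem_cons.mp hb with h | h
        · exact h ▸ hpos
        · exact hposL b h⟩

end FlowAux

section FlowAux2

variable {V A : Type*} [Fintype V] [Fintype A] [DecidableEq V] [DecidableEq A]

lemma cycle_of_forall_succ {r : V → V → Prop} {S : Set V}
    (hS : ∀ u ∈ S, ∃ v, v ∈ S ∧ r u v) {c : V} (hc : c ∈ S) :
    ∃ u, Relation.TransGen r u u := by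
  choose f hf1 hf2 using hS
  let g : ℕ → {u // u ∈ S} := fun n =>
    Nat.rec ⟨c, hc⟩ (fun _ p => ⟨f p.1 p.2, hf1 p.1 p.2⟩) n
  have hstep : ∀ n, r (g n).1 (g (n+1)).1 := fun n => hf2 _ _
  have hchain : ∀ j i, i < j → Relation.TransGen r (g i).1 (g j).1 := by
    intro j
    induction j with
    | zero => omega
    | succ j ih =>
        intro i hij
        rcases Nat.lt_succ_iff_lt_or_eq.mp hij with h | h
        · exact (ih i h).tail (hstep j)
        · rw [h]; exact Relation.TransGen.single (hstep j)
  obtain ⟨i, j, hne, heq⟩ := Finite.exists_ne_map_eq_of_infinite (fun n => (g n).1)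
  rcases hne.lt_or_gt with h | h
  · exact ⟨(g i).1, by have := hchain j i h; rwa [← heq] at this⟩
  · exact ⟨(g j).1, by have := hchain i j h; rwa [heq] at this⟩

lemma pos_arc_of_sum_pos (x : A → ℝ) {p : A → Prop} [DecidablePred p]
    (h : 0 < ∑ a ∈ univ.filter p, x a) : ∃ a, p a ∧ 0 < x a := by
  by_contra hcon
  push_neg at hcon
  have : ∑ a ∈ univ.filter p, x a ≤ 0 := by
    apply Finset.sum_nonpos
    intro a ha
    exact hcon a (mem_filter.mp ha).2
  linarith

lemma reduce_along {tail head : A → V} (x : A → ℝ) (hx0 : ∀ a, 0 ≤ x a)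
    {u w : V} {L : List A} (hw : IsWalk tail head u w L)
    (hpos : ∀ a ∈ L, 0 < x a) (hne : L ≠ []) :
    ∃ (x₁ : A → ℝ) (δ : ℝ), 0 < δ ∧ (∀ a, x₁ a = x a - δ * L.count a) ∧
      (∀ a, 0 ≤ x₁ a) ∧ (∀ a, x₁ a ≤ x a) ∧ (∃ a0 ∈ L, x₁ a0 = 0) := by
  have hT : L.toFinset.Nonempty := by
    rcases List.exists_mem_of_ne_nil L hne with ⟨a, ha⟩
    exact ⟨a, List.mem_toFinset.mpr ha⟩
  obtain ⟨a0, ha0, hmin⟩ := Finset.exists_min_image L.toFinset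
    (fun a => x a / L.count a) hT
  rw [List.mem_toFinset] at ha0
  have hc0 : (0 : ℝ) < L.count a0 := by
    exact_mod_cast List.count_pos_iff.mpr ha0
  set δ : ℝ := x a0 / L.count a0 with hδ
  have hδpos : 0 < δ := div_pos (hpos a0 ha0) hc0
  refine ⟨fun a => x a - δ * L.count a, δ, hδpos, fun a => rfl, ?_, ?_, ⟨a0, ha0, ?_⟩⟩
  · intro a
    show 0 ≤ x a - δ * L.count a
    by_cases haL : a ∈ L
    · have hca : (0 : ℝ) < L.count a := by
        exact_mod_cast List.count_pos_iff.mpr haL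
      have := hmin a (List.mem_toFinset.mpr haL)
      have h2 : δ * L.count a ≤ x a := by
        rw [← le_div_iff₀ hca]; exact this
      linarith
    · have hz : L.count a = 0 := List.count_eq_zero_of_not_mem haL
      rw [hz]
      simpa using hx0 a
  · intro a
    show x a - δ * L.count a ≤ x a
    have := mul_nonneg hδpos.le (Nat.cast_nonneg (α := ℝ) (L.count a))
    linarith
  · show x a0 - δ * L.count a0 = 0
    rw [hδ, div_mul_cancel₀ _ (ne_of_gt hc0)]
    ring

end FlowAux2

section Reduce

variable {V A : Type*} [Fintype V] [Fintype A] [DecidableEq V] [DecidableEq A]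

lemma sum_sub_walk {tail head : A → V} (x : A → ℝ) (δ : ℝ) (L : List A)
    (p : A → Prop) [DecidablePred p] :
    ∑ a ∈ univ.filter p, (x a - δ * L.count a) =
      (∑ a ∈ univ.filter p, x a) - δ * (L.countP (fun a => decide (p a)) : ℝ) := by
  rw [Finset.sum_sub_distrib, ← Finset.mul_sum, sum_count_eq]

lemma reduce (tail head : A → V) (s t : V) (hst : s ≠ t)
    (hNoIn : ∀ a : A, head a ≠ s)
    (x : A → ℝ) (hx0 : ∀ a, 0 ≤ x a)
    (hcons : ∀ v : V, v ≠ s → v ≠ t →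
      ∑ a ∈ univ.filter (fun a => tail a = v), x a =
        ∑ a ∈ univ.filter (fun a => head a = v), x a)
    (e : A) (hxe : 0 < x e) :
    ∃ x₁ : A → ℝ, (∀ a, 0 ≤ x₁ a) ∧
      (∀ v : V, v ≠ s → v ≠ t →
        ∑ a ∈ univ.filter (fun a => tail a = v), x₁ a =
          ∑ a ∈ univ.filter (fun a => head a = v), x₁ a) ∧
      (∀ a, x₁ a ≤ x a) ∧
      (univ.filter (fun a => 0 < x₁ a)).card < (univ.filter (fun a => 0 < x a)).card ∧
      (∑ a ∈ univ.filter (fun a => tail a = s), x₁ a) - x₁ e ≥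
        (∑ a ∈ univ.filter (fun a => tail a = s), x a) - x e := by
  classical
  set r : V → V → Prop := fun p q => ∃ a, 0 < x a ∧ tail a = p ∧ head a = q with hr
  -- step 1: produce a suitable walk
  have key : ∃ (u w : V) (L : List A), IsWalk tail head u w L ∧ (∀ a ∈ L, 0 < x a) ∧
      L ≠ [] ∧ (u = w ∨ (u = s ∧ w = t ∧ e ∈ L)) := by
    -- from a vertex with positive in-arc & not t, we can step forward
    have hfwd : ∀ u : V, (∃ b, 0 < x b ∧ head b = u) → u ≠ t → ∃ v, r u v := by
      intro u ⟨b, hb, hbu⟩ hut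
      have hus : u ≠ s := hbu ▸ hNoIn b
      have hin : 0 < ∑ a ∈ univ.filter (fun a => head a = u), x a := by
        have hbmem : b ∈ univ.filter (fun a => head a = u) := by
          simp [hbu]
        have := Finset.single_le_sum (f := x) (fun a _ => hx0 a) hbmem
        linarith
      have hout : 0 < ∑ a ∈ univ.filter (fun a => tail a = u), x a := by
        rw [hcons u hus hut]; exact hin
      obtain ⟨a, hta, hxa⟩ := pos_arc_of_sum_pos x hout
      exact ⟨head a, a, hxa, hta, rfl⟩
    have hbwd : ∀ u : V, (∃ b, 0 < x b ∧ tail b = u) → u ≠ s → u ≠ t →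
        ∃ v, r v u := by
      intro u ⟨b, hb, hbu⟩ hus hut
      have hout : 0 < ∑ a ∈ univ.filter (fun a => tail a = u), x a := by
        have hbmem : b ∈ univ.filter (fun a => tail a = u) := by simp [hbu]
        have := Finset.single_le_sum (f := x) (fun a _ => hx0 a) hbmem
        linarith
      have hin : 0 < ∑ a ∈ univ.filter (fun a => head a = u), x a := by
        rw [← hcons u hus hut]; exact hout
      obtain ⟨a, hha, hxa⟩ := pos_arc_of_sum_pos x hin
      exact ⟨tail a, a, hxa, rfl, hha⟩
    by_cases hcyc : ∃ c, Relation.TransGen r c c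
    · -- closed walk case
      obtain ⟨c, hc⟩ := hcyc
      obtain ⟨b, hrb, hrt⟩ := (Relation.TransGen.head'_iff).mp hc
      obtain ⟨a, hxa, hta, hha⟩ := hrb
      obtain ⟨L, hwL, hposL⟩ := exists_walk_of_reflTransGen x (hha ▸ hrt)
      refine ⟨c, c, a :: L, IsWalk.cons hta hwL, ?_, by simp, Or.inl rfl⟩
      intro b' hb'
      rcases List.mem_cons.mp hb' with h | h
      · exact h ▸ hxa
      · exact hposL b' h
    · -- no positive cycle: find s-t walk through e
      -- forward reachability from head e
      have hreachT : Relation.ReflTransGen r (head e) t := by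
        by_contra hnt
        have : ∃ u, Relation.TransGen r u u := by
          apply cycle_of_forall_succ (S := {u | Relation.ReflTransGen r (head e) u})
            (c := head e) ?_ Relation.ReflTransGen.refl
          intro u hu
          have hin : ∃ b, 0 < x b ∧ head b = u := by
            rcases Relation.ReflTransGen.cases_tail hu with h | ⟨w', _, hw'⟩
            · exact ⟨e, hxe, h.symm⟩
            · obtain ⟨a, hxa, _, hha⟩ := hw'
              exact ⟨a, hxa, hha⟩
          have hut : u ≠ t := fun h => hnt (h ▸ hu)
          obtain ⟨v, hv⟩ := hfwd u hin hut
          exact ⟨v, hu.tail hv, hv⟩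
        exact hcyc this
      -- backward reachability from tail e
      have hreachS : Relation.ReflTransGen r s (tail e) := by
        have hswap : Relation.ReflTransGen (Function.swap r) (tail e) s := by
          by_contra hns
          have htnot : ¬ Relation.ReflTransGen (Function.swap r) (tail e) t := by
            intro ht
            have h1 : Relation.ReflTransGen r t (tail e) :=
              (Relation.reflTransGen_swap).mp ht
            have h2 : Relation.TransGen r (tail e) t :=
              Relation.TransGen.head'_iff.mpr ⟨head e, ⟨e, hxe, rfl, rfl⟩, hreachT⟩
            exact hcyc ⟨tail e, h2.trans_left h1⟩
          have : ∃ u, Relation.TransGen (Function.swap r) u u := by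
            apply cycle_of_forall_succ
              (S := {u | Relation.ReflTransGen (Function.swap r) (tail e) u})
              (c := tail e) ?_ Relation.ReflTransGen.refl
            intro u hu
            have hout : ∃ b, 0 < x b ∧ tail b = u := by
              rcases Relation.ReflTransGen.cases_tail hu with h | ⟨w', _, hw'⟩
              · exact ⟨e, hxe, h.symm⟩
              · obtain ⟨a, hxa, hta, _⟩ := hw'
                exact ⟨a, hxa, hta⟩
            have hus : u ≠ s := fun h => hns (h ▸ hu)
            have hut : u ≠ t := fun h => htnot (h ▸ hu)
            obtain ⟨v, hv⟩ := hbwd u hout hus hut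
            exact ⟨v, hu.tail hv, hv⟩
          obtain ⟨u, hu⟩ := this
          exact hcyc ⟨u, (Relation.transGen_swap).mp hu⟩
        exact (Relation.reflTransGen_swap).mp hswap
      obtain ⟨L1, hwL1, hposL1⟩ := exists_walk_of_reflTransGen x hreachS
      obtain ⟨L2, hwL2, hposL2⟩ := exists_walk_of_reflTransGen x hreachT
      refine ⟨s, t, L1 ++ e :: L2, isWalk_append hwL1 (IsWalk.cons rfl hwL2), ?_, by simp,
        Or.inr ⟨rfl, rfl, by simp⟩⟩
      intro b hb
      rcases List.mem_append.mp hb with h | h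
      · exact hposL1 b h
      rcases List.mem_cons.mp h with h | h
      · exact h ▸ hxe
      · exact hposL2 b h
  -- step 2: subtract along the walk
  obtain ⟨u, w, L, hwL, hposL, hLne, hcase⟩ := key
  obtain ⟨x₁, δ, hδpos, hx₁def, hx₁0, hx₁le, a0, ha0L, ha00⟩ :=
    reduce_along x hx0 hwL hposL hLne
  have hheads : (L.countP (fun a => decide (head a = s))) = 0 := by
    rw [List.countP_eq_zero]
    intro a _
    simp [hNoIn a]
  have hsum : ∀ (p : A → Prop) [DecidablePred p],
      ∑ a ∈ univ.filter p, x₁ a =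
        (∑ a ∈ univ.filter p, x a) - δ * (L.countP (fun a => decide (p a)) : ℝ) := by
    intro p _
    rw [← sum_sub_walk (tail := tail) (head := head)]
    exact Finset.sum_congr rfl fun a _ => hx₁def a
  have hcard : (univ.filter (fun a => 0 < x₁ a)).card <
      (univ.filter (fun a => 0 < x a)).card := by
    apply Finset.card_lt_card
    constructor
    · intro a ha
      simp only [mem_filter, mem_univ, true_and] at *
      exact lt_of_lt_of_le ha (hx₁le a)
    · intro hsub
      have : a0 ∈ univ.filter (fun a => 0 < x a) := by
        simp [hposL a0 ha0L]
      have := hsub this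
      simp only [mem_filter, mem_univ, true_and] at this
      exact absurd ha00 (ne_of_gt this)
  have hcons₁ : ∀ v : V, v ≠ s → v ≠ t →
      ∑ a ∈ univ.filter (fun a => tail a = v), x₁ a =
        ∑ a ∈ univ.filter (fun a => head a = v), x₁ a := by
    intro v hvs hvt
    rw [hsum, hsum, hcons v hvs hvt]
    have hcount := isWalk_countP hwL v
    have hco : (L.countP (fun a => decide (tail a = v))) =
        (L.countP (fun a => decide (head a = v))) := by
      rcases hcase with h | ⟨hu, hw, _⟩
      · subst h; omega
      · rw [hu, hw] at hcount
        rw [if_neg (Ne.symm hvt), if_neg (Ne.symm hvs)] at hcount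
        omega
    rw [hco]
  refine ⟨x₁, hx₁0, hcons₁, hx₁le, hcard, ?_⟩
  -- value inequality
  have hcount := isWalk_countP hwL s
  rcases hcase with h | ⟨hu, hw, heL⟩
  · -- closed walk: value unchanged, x₁ e ≤ x e
    have hco : (L.countP (fun a => decide (tail a = s))) = 0 := by
      subst h; omega
    have hval : ∑ a ∈ univ.filter (fun a => tail a = s), x₁ a =
        ∑ a ∈ univ.filter (fun a => tail a = s), x a := by
      rw [hsum, hco]; push_cast; ring
    rw [hval]
    have := hx₁le e
    linarith
  · rw [hu, hw] at hcount
    have hco : (L.countP (fun a => decide (tail a = s))) = 1 := by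
      rw [if_neg (Ne.symm hst), if_pos rfl] at hcount
      omega
    have hval : ∑ a ∈ univ.filter (fun a => tail a = s), x₁ a =
        (∑ a ∈ univ.filter (fun a => tail a = s), x a) - δ := by
      rw [hsum, hco]; push_cast; ring
    have hce : (1 : ℝ) ≤ L.count e := by
      exact_mod_cast List.count_pos_iff.mpr heL
    have hxe1 : x₁ e = x e - δ * L.count e := hx₁def e
    rw [hval, hxe1]
    nlinarith
end Reduce

section Main

variable {V A : Type*} [Fintype V] [Fintype A] [DecidableEq V] [DecidableEq A]

lemma flow_main (tail head : A → V) (s t : V) (hst : s ≠ t)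
    (hNoIn : ∀ a : A, head a ≠ s) (e : A) :
    ∀ n (x : A → ℝ), (∀ a, 0 ≤ x a) →
    (∀ v : V, v ≠ s → v ≠ t →
      ∑ a ∈ univ.filter (fun a => tail a = v), x a =
        ∑ a ∈ univ.filter (fun a => head a = v), x a) →
    (univ.filter (fun a => 0 < x a)).card ≤ n →
    ∃ x' : A → ℝ, (∀ a, 0 ≤ x' a) ∧
      (∀ v : V, v ≠ s → v ≠ t →
        ∑ a ∈ univ.filter (fun a => tail a = v), x' a =
          ∑ a ∈ univ.filter (fun a => head a = v), x' a) ∧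
      (∀ a, x' a ≤ x a) ∧ x' e = 0 ∧
      ∑ a ∈ univ.filter (fun a => tail a = s), x' a ≥
        (∑ a ∈ univ.filter (fun a => tail a = s), x a) - x e := by
  intro n
  induction n with
  | zero =>
      intro x hx0 hcons hcard
      have hxe : x e = 0 := by
        by_contra h
        have : 0 < x e := lt_of_le_of_ne (hx0 e) (Ne.symm h)
        have : e ∈ univ.filter (fun a => 0 < x a) := by simp [this]
        have := Finset.card_pos.mpr ⟨e, this⟩
        omega
      exact ⟨x, hx0, hcons, fun a => le_refl _, hxe, by rw [hxe]; simp⟩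
  | succ n ih =>
      intro x hx0 hcons hcard
      by_cases hxe : 0 < x e
      · obtain ⟨x₁, hx₁0, hcons₁, hx₁le, hcard₁, hval₁⟩ :=
          reduce tail head s t hst hNoIn x hx0 hcons e hxe
        obtain ⟨x', hx'0, hcons', hx'le, hx'e, hval'⟩ :=
          ih x₁ hx₁0 hcons₁ (by omega)
        refine ⟨x', hx'0, hcons', fun a => (hx'le a).trans (hx₁le a), hx'e, ?_⟩
        have h1 : ∑ a ∈ univ.filter (fun a => tail a = s), x' a ≥
            (∑ a ∈ univ.filter (fun a => tail a = s), x₁ a) - x₁ e := hval'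
        linarith [hval₁]
      · have hxe0 : x e = 0 := le_antisymm (not_lt.mp hxe) (hx0 e)
        exact ⟨x, hx0, hcons, fun a => le_refl _, hxe0, by rw [hxe0]; simp⟩

end Main

/-- The `s`-`t` flow polytope is `w`-down-closed for `w = χ^{δ⁺(s)}`: for any
`s`-`t` flow `x` and arc `e`, there is a flow `x' ≤ x` with `x'(e) = 0` and
value at least `value(x) - x(e)`. -/
theorem flow_wDownClosed {V A : Type*} [Fintype V] [Fintype A]
    [DecidableEq V] (tail head : A → V) (s t : V) (hst : s ≠ t)
    (hNoIn : ∀ a : A, head a ≠ s)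
    (x : A → ℝ) (hx0 : ∀ a, 0 ≤ x a)
    (hcons : ∀ v : V, v ≠ s → v ≠ t →
      ∑ a ∈ univ.filter (fun a => tail a = v), x a =
        ∑ a ∈ univ.filter (fun a => head a = v), x a)
    (e : A) :
    ∃ x' : A → ℝ, (∀ a, 0 ≤ x' a) ∧
      (∀ v : V, v ≠ s → v ≠ t →
        ∑ a ∈ univ.filter (fun a => tail a = v), x' a =
          ∑ a ∈ univ.filter (fun a => head a = v), x' a) ∧
      (∀ a, x' a ≤ x a) ∧ x' e = 0 ∧
      ∑ a ∈ univ.filter (fun a => tail a = s), x' a ≥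
        (∑ a ∈ univ.filter (fun a => tail a = s), x a) - x e := by
  classical
  exact flow_main tail head s t hst hNoIn e
    ((univ.filter (fun a => 0 < x a)).card) x hx0 hcons le_rfl
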